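/- Let u : ℝ² → ℝ be a twice continuously differentiable solution of the minimal surface equation (1 + u_y²)u_xx − 2u_x u_y u_xy + (1 + u_x²)u_yy = 0 on a connected open set. Suppose there is a continuously differentiable function f : ℝ → ℝ such that u_y = f(u_x) everywhere on this set. Then u_x and u_y are constant, i.e., the graph of u is a plane. -/

import Mathlib

noncomputable def pd₁ (f : ℝ → ℝ → ℝ) : ℝ → ℝ → ℝ := fun p q => deriv (fun x => f x q) p
noncomputable def pd₂ (f : ℝ → ℝ → ℝ) : ℝ → ℝ → ℝ := fun p q => deriv (fun y => f p y) q

/-- Derivative along the first coordinate equals the full derivative applied to `(1,0)`. -/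
lemma deriv_fst_eq (g : ℝ × ℝ → ℝ) (a b : ℝ) (h : DifferentiableAt ℝ g (a, b)) :
    deriv (fun x => g (x, b)) a = fderiv ℝ g (a, b) (1, 0) := by
  have h1 : HasDerivAt (fun x : ℝ => (x, b)) ((1 : ℝ), (0 : ℝ)) a :=
    (hasDerivAt_id a).prodMk (hasDerivAt_const a b)
  exact (h.hasFDerivAt.comp_hasDerivAt a h1).deriv

lemma deriv_snd_eq (g : ℝ × ℝ → ℝ) (a b : ℝ) (h : DifferentiableAt ℝ g (a, b)) :
    deriv (fun y => g (a, y)) b = fderiv ℝ g (a, b) (0, 1) := by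
  have h1 : HasDerivAt (fun y : ℝ => (a, y)) ((0 : ℝ), (1 : ℝ)) b :=
    (hasDerivAt_const b a).prodMk (hasDerivAt_id b)
  exact (h.hasFDerivAt.comp_hasDerivAt b h1).deriv

/-- A differentiable function with vanishing derivative on an open preconnected set is constant. -/
lemma const_of_fderiv_zero_on {s : Set (ℝ × ℝ)} (hs : IsOpen s) (hc : IsPreconnected s)
    {g : ℝ × ℝ → ℝ} (hdiff : ∀ x ∈ s, DifferentiableAt ℝ g x)
    (hzero : ∀ x ∈ s, fderiv ℝ g x = 0) {x y : ℝ × ℝ} (hx : x ∈ s) (hy : y ∈ s) :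
    g y = g x := by
  -- local constancy on balls
  have hloc : ∀ z ∈ s, ∃ ε > 0, Metric.ball z ε ⊆ s ∧ ∀ w ∈ Metric.ball z ε, g w = g z := by
    intro z hz
    obtain ⟨ε, hε, hball⟩ := Metric.isOpen_iff.1 hs z hz
    refine ⟨ε, hε, hball, fun w hw => ?_⟩
    have hconv : Convex ℝ (Metric.ball z ε) := convex_ball z ε
    refine hconv.is_const_of_fderivWithin_eq_zero
      (fun p hp => (hdiff p (hball hp)).differentiableWithinAt) ?_ hw (Metric.mem_ball_self hε)
    intro p hp
    rw [fderivWithin_of_isOpen Metric.isOpen_ball hp]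
    exact hzero p (hball hp)
  -- clopen argument
  set t : Set (ℝ × ℝ) := {z ∈ s | g z = g x} with ht
  set t' : Set (ℝ × ℝ) := {z ∈ s | g z ≠ g x} with ht'
  have hto : IsOpen t := by
    rw [isOpen_iff_mem_nhds]
    rintro z ⟨hzs, hzg⟩
    obtain ⟨ε, hε, hball, hconst⟩ := hloc z hzs
    refine Filter.mem_of_superset (Metric.ball_mem_nhds z hε) ?_
    intro w hw
    exact ⟨hball hw, by rw [hconst w hw, hzg]⟩
  have ht'o : IsOpen t' := by
    rw [isOpen_iff_mem_nhds]
    rintro z ⟨hzs, hzg⟩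
    obtain ⟨ε, hε, hball, hconst⟩ := hloc z hzs
    refine Filter.mem_of_superset (Metric.ball_mem_nhds z hε) ?_
    intro w hw
    exact ⟨hball hw, by rw [hconst w hw]; exact hzg⟩
  by_contra hne
  have hcover : s ⊆ t ∪ t' := by
    intro z hz
    by_cases h : g z = g x
    · exact Or.inl ⟨hz, h⟩
    · exact Or.inr ⟨hz, h⟩
  obtain ⟨w, hws, hwt, hwt'⟩ := hc t t' hto ht'o hcover ⟨x, hx, hx, rfl⟩ ⟨y, hy, hy, hne⟩
  exact hwt'.2 hwt.2

theorem invariant_minimal_surface_is_plane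
    (s : Set (ℝ × ℝ)) (hs : IsOpen s) (hconn : IsConnected s)
    (u : ℝ → ℝ → ℝ) (hu : ContDiffOn ℝ 2 (fun z : ℝ × ℝ => u z.1 z.2) s)
    (hPDE : ∀ z ∈ s,
      (1 + pd₂ u z.1 z.2 ^ 2) * pd₁ (pd₁ u) z.1 z.2
        - 2 * pd₁ u z.1 z.2 * pd₂ u z.1 z.2 * pd₁ (pd₂ u) z.1 z.2
        + (1 + pd₁ u z.1 z.2 ^ 2) * pd₂ (pd₂ u) z.1 z.2 = 0)
    (f : ℝ → ℝ) (hf : ContDiff ℝ 1 f)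
    (hconstraint : ∀ z ∈ s, pd₂ u z.1 z.2 = f (pd₁ u z.1 z.2)) :
    ∃ c₁ c₂ : ℝ, ∀ z ∈ s, pd₁ u z.1 z.2 = c₁ ∧ pd₂ u z.1 z.2 = c₂ := by
  set U : ℝ × ℝ → ℝ := fun z => u z.1 z.2 with hU
  set P : ℝ × ℝ → ℝ := fun z => fderiv ℝ U z (1, 0) with hP
  set Q : ℝ × ℝ → ℝ := fun z => fderiv ℝ U z (0, 1) with hQ
  -- basic smoothness facts at points of s
  have hUat : ∀ z ∈ s, ContDiffAt ℝ 2 U z := fun z hz => hu.contDiffAt (hs.mem_nhds hz)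
  have hUdiff : ∀ z ∈ s, DifferentiableAt ℝ U z := fun z hz =>
    (hUat z hz).differentiableAt two_ne_zero
  have hF'at : ∀ z ∈ s, ContDiffAt ℝ 1 (fderiv ℝ U) z := fun z hz =>
    (hUat z hz).fderiv_right le_rfl
  have hF'diff : ∀ z ∈ s, DifferentiableAt ℝ (fderiv ℝ U) z := fun z hz =>
    (hF'at z hz).differentiableAt one_ne_zero
  -- identification of first partials
  have hpd1 : ∀ z ∈ s, pd₁ u z.1 z.2 = P z := by
    intro z hz
    exact deriv_fst_eq U z.1 z.2 (hUdiff z hz)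
  have hpd2 : ∀ z ∈ s, pd₂ u z.1 z.2 = Q z := by
    intro z hz
    exact deriv_snd_eq U z.1 z.2 (hUdiff z hz)
  -- P and Q differentiable at points of s, with derivatives given by the second fderiv
  have hPQ : ∀ z ∈ s, HasFDerivAt P
      ((ContinuousLinearMap.apply ℝ ℝ (((1 : ℝ), (0 : ℝ)) : ℝ × ℝ)).comp
        (fderiv ℝ (fderiv ℝ U) z)) z ∧ HasFDerivAt Q
      ((ContinuousLinearMap.apply ℝ ℝ (((0 : ℝ), (1 : ℝ)) : ℝ × ℝ)).comp
        (fderiv ℝ (fderiv ℝ U) z)) z := by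
    intro z hz
    constructor
    · exact ((ContinuousLinearMap.apply ℝ ℝ (((1 : ℝ), (0 : ℝ)) : ℝ × ℝ)).hasFDerivAt).comp z
        (hF'diff z hz).hasFDerivAt
    · exact ((ContinuousLinearMap.apply ℝ ℝ (((0 : ℝ), (1 : ℝ)) : ℝ × ℝ)).hasFDerivAt).comp z
        (hF'diff z hz).hasFDerivAt
  have hPdiff : ∀ z ∈ s, DifferentiableAt ℝ P z := fun z hz => (hPQ z hz).1.differentiableAt
  have hQdiff : ∀ z ∈ s, DifferentiableAt ℝ Q z := fun z hz => (hPQ z hz).2.differentiableAt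
  have hfderivP : ∀ z ∈ s, ∀ w, fderiv ℝ P z w = fderiv ℝ (fderiv ℝ U) z w (1, 0) := by
    intro z hz w
    rw [(hPQ z hz).1.fderiv]
    rfl
  have hfderivQ : ∀ z ∈ s, ∀ w, fderiv ℝ Q z w = fderiv ℝ (fderiv ℝ U) z w (0, 1) := by
    intro z hz w
    rw [(hPQ z hz).2.fderiv]
    rfl
  -- symmetry of the second derivative
  have hsym : ∀ z ∈ s, ∀ v w, fderiv ℝ (fderiv ℝ U) z v w = fderiv ℝ (fderiv ℝ U) z w v :=
    fun z hz => (hUat z hz).isSymmSndFDerivAt (by simp)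
  -- Q = f ∘ P on s, hence the chain rule relates their derivatives
  have hQP : ∀ z ∈ s, Q z = f (P z) := by
    intro z hz
    rw [← hpd1 z hz, ← hpd2 z hz]
    exact hconstraint z hz
  have hchain : ∀ z ∈ s, ∀ w, fderiv ℝ Q z w = deriv f (P z) * fderiv ℝ P z w := by
    intro z hz w
    have hev : Q =ᶠ[nhds z] (fun w => f (P w)) := by
      filter_upwards [hs.mem_nhds hz] with w hw using hQP w hw
    have hfd : HasDerivAt f (deriv f (P z)) (P z) :=
      ((hf.differentiable one_ne_zero) (P z)).hasDerivAt
    have hcomp : HasFDerivAt (fun w => f (P w))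
        ((ContinuousLinearMap.smulRight (1 : ℝ →L[ℝ] ℝ) (deriv f (P z))).comp (fderiv ℝ P z)) z :=
      hfd.hasFDerivAt.comp z (hPdiff z hz).hasFDerivAt
    rw [hev.fderiv_eq, hcomp.fderiv]
    simp [mul_comm]
  -- At each point of s, all second partials vanish
  have hkey : ∀ z ∈ s, fderiv ℝ P z = 0 := by
    intro z hz
    set c : ℝ := deriv f (P z) with hc
    set a : ℝ := fderiv ℝ (fderiv ℝ U) z (1, 0) (1, 0) with ha
    -- second partials in terms of a and c
    have h11 : pd₁ (pd₁ u) z.1 z.2 = a := by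
      have hev : (fun x => pd₁ u x z.2) =ᶠ[nhds z.1] (fun x => P (x, z.2)) := by
        have hcont : ContinuousAt (fun x : ℝ => ((x, z.2) : ℝ × ℝ)) z.1 := by fun_prop
        filter_upwards [hcont (hs.mem_nhds hz)] with x hx using hpd1 (x, z.2) hx
      show deriv (fun x => pd₁ u x z.2) z.1 = a
      rw [hev.deriv_eq, deriv_fst_eq P z.1 z.2 (hPdiff z hz)]
      show fderiv ℝ P z (1, 0) = a
      rw [hfderivP z hz]
    have h12 : pd₁ (pd₂ u) z.1 z.2 = c * a := by
      have hev : (fun x => pd₂ u x z.2) =ᶠ[nhds z.1] (fun x => Q (x, z.2)) := by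
        have hcont : ContinuousAt (fun x : ℝ => ((x, z.2) : ℝ × ℝ)) z.1 := by fun_prop
        filter_upwards [hcont (hs.mem_nhds hz)] with x hx using hpd2 (x, z.2) hx
      show deriv (fun x => pd₂ u x z.2) z.1 = c * a
      rw [hev.deriv_eq, deriv_fst_eq Q z.1 z.2 (hQdiff z hz)]
      show fderiv ℝ Q z (1, 0) = c * a
      rw [hchain z hz, hfderivP z hz]
    have hP01 : fderiv ℝ P z (0, 1) = c * a := by
      rw [hfderivP z hz, hsym z hz, ← hfderivQ z hz, hchain z hz, hfderivP z hz]
    have h22 : pd₂ (pd₂ u) z.1 z.2 = c * (c * a) := by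
      have hev : (fun y => pd₂ u z.1 y) =ᶠ[nhds z.2] (fun y => Q (z.1, y)) := by
        have hcont : ContinuousAt (fun y : ℝ => ((z.1, y) : ℝ × ℝ)) z.2 := by fun_prop
        filter_upwards [hcont (hs.mem_nhds hz)] with y hy using hpd2 (z.1, y) hy
      show deriv (fun y => pd₂ u z.1 y) z.2 = c * (c * a)
      rw [hev.deriv_eq, deriv_snd_eq Q z.1 z.2 (hQdiff z hz)]
      show fderiv ℝ Q z (0, 1) = c * (c * a)
      rw [hchain z hz, hP01]
    -- plug into the PDE
    have hpde := hPDE z hz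
    rw [h11, h12, h22, hpd1 z hz, hpd2 z hz, hQP z hz] at hpde
    have hfactor : a * (1 + c ^ 2 + (f (P z) - P z * c) ^ 2) = 0 := by
      linear_combination hpde
    have hpos : (0 : ℝ) < 1 + c ^ 2 + (f (P z) - P z * c) ^ 2 := by positivity
    have ha0 : a = 0 := by
      rcases mul_eq_zero.1 hfactor with h | h
      · exact h
      · linarith
    -- conclude fderiv P z = 0
    refine ContinuousLinearMap.ext fun w => ?_
    have hdec : (w : ℝ × ℝ) = w.1 • (((1 : ℝ), (0 : ℝ)) : ℝ × ℝ)
        + w.2 • (((0 : ℝ), (1 : ℝ)) : ℝ × ℝ) := by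
      ext <;> simp
    rw [hdec, map_add, map_smul, map_smul]
    have e1 : fderiv ℝ P z ((1 : ℝ), (0 : ℝ)) = 0 := by
      rw [hfderivP z hz]; exact ha ▸ ha0
    have e2 : fderiv ℝ P z ((0 : ℝ), (1 : ℝ)) = 0 := by
      rw [hP01, ha0, mul_zero]
    rw [e1, e2]
    simp
  -- P is constant on s
  obtain ⟨z₀, hz₀⟩ := hconn.nonempty
  refine ⟨P z₀, f (P z₀), fun z hz => ?_⟩
  have hPconst : P z = P z₀ :=
    const_of_fderiv_zero_on hs hconn.isPreconnected hPdiff hkey hz₀ hz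
  constructor
  · rw [hpd1 z hz, hPconst]
  · rw [hconstraint z hz, hpd1 z hz, hPconst]
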